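/- Let l, k, r, q be positive integers with r ≤ k, q dividing l^{k−r}, l not dividing q, and suppose either r ≥ k/2, or r < k/2 and l^{k−2r} divides q². Let ε ∈ {1, −1} and let m be an integer with gcd(m, l^{k−r}/q) = 1. Then S(ε + l^r·q·m, l^k) = ε·(2/l^k + l^{2r−k}·q² − 3). -/

import Mathlib

open scoped Classical
open Finset

/-- The sawtooth function `((x))`. -/
noncomputable def saw (x : ℝ) : ℝ :=
  if ∃ z : ℤ, (z : ℝ) = x then 0 else x - ⌊x⌋ - 1/2

/-- The classical Dedekind sum `s(m,n)`. -/
noncomputable def ded (m n : ℤ) : ℝ :=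
  ∑ k ∈ Finset.Icc (1 : ℤ) n, saw ((k : ℝ) / n) * saw ((m : ℝ) * k / n)

/-- The normalized Dedekind sum `S(m,n) = 12 s(m,n)`. -/
noncomputable def Sded (m n : ℤ) : ℝ := 12 * ded m n

lemma saw_intCast (z : ℤ) : saw (z : ℝ) = 0 := by
  unfold saw; rw [if_pos ⟨z, rfl⟩]

lemma saw_int_add (x : ℝ) (z : ℤ) : saw (x + z) = saw x := by
  unfold saw
  by_cases h : ∃ w : ℤ, (w : ℝ) = x
  · rw [if_pos h, if_pos]
    obtain ⟨w, hw⟩ := h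
    exact ⟨w + z, by push_cast [← hw]; ring⟩
  · rw [if_neg h, if_neg]
    · rw [Int.floor_add_intCast]; push_cast; ring
    · rintro ⟨w, hw⟩
      exact h ⟨w - z, by push_cast; linarith⟩

lemma saw_of_Ioo (x : ℝ) (h0 : 0 < x) (h1 : x < 1) : saw x = x - 1/2 := by
  unfold saw
  rw [if_neg, Int.floor_eq_zero_iff.2 ⟨h0.le, h1⟩]
  · simp
  · rintro ⟨w, hw⟩
    have : (0:ℤ) < w := by exact_mod_cast hw ▸ h0
    have : w < 1 := by exact_mod_cast hw ▸ h1
    omega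

lemma saw_neg (x : ℝ) : saw (-x) = - saw x := by
  unfold saw
  by_cases h : ∃ w : ℤ, (w : ℝ) = x
  · rw [if_pos h, if_pos]; · simp
    obtain ⟨w, hw⟩ := h; exact ⟨-w, by push_cast [hw]; ring⟩
  · have h' : ¬ ∃ w : ℤ, (w : ℝ) = -x := by
      rintro ⟨w, hw⟩; exact h ⟨-w, by push_cast; linarith⟩
    rw [if_neg h, if_neg h']
    have hf : Int.fract x ≠ 0 := by
      intro h0
      have : x = (⌊x⌋ : ℝ) := by
        have := Int.fract_add_floor x; rw [h0] at this; linarith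
      exact h ⟨⌊x⌋, this.symm⟩
    have h1 : Int.fract (-x) = 1 - Int.fract x := Int.fract_neg hf
    have e1 : Int.fract x = x - ⌊x⌋ := (Int.self_sub_floor x).symm
    have e2 : Int.fract (-x) = -x - ⌊-x⌋ := (Int.self_sub_floor (-x)).symm
    linarith

lemma sum_range_cast (n : ℕ) : ∑ i ∈ range n, (i : ℝ) = n * (n - 1) / 2 := by
  induction n with
  | zero => simp
  | succ n ih => rw [Finset.sum_range_succ, ih]; push_cast; ring

lemma sum_range_sq_cast (n : ℕ) :
    ∑ i ∈ range n, (i : ℝ) ^ 2 = n * (n - 1) * (2 * n - 1) / 6 := by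
  induction n with
  | zero => simp
  | succ n ih => rw [Finset.sum_range_succ, ih]; push_cast; ring

lemma sum_lin_prod (n : ℕ) (G A B : ℝ) (hG : G ≠ 0) :
    ∑ s ∈ range n, ((s : ℝ) / G + A) * ((s : ℝ) / G + B)
      = (n * (n - 1) * (2 * n - 1) / 6) / G ^ 2
        + (A + B) * (n * (n - 1) / 2) / G + A * B * n := by
  have : ∀ s ∈ range n, ((s : ℝ) / G + A) * ((s : ℝ) / G + B)
      = (1 / G ^ 2) * (s : ℝ) ^ 2 + ((A + B) / G) * (s : ℝ) + A * B := by
    intro s _; field_simp; ring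
  rw [Finset.sum_congr rfl this]
  rw [Finset.sum_add_distrib, Finset.sum_add_distrib, ← Finset.mul_sum, ← Finset.mul_sum,
    Finset.sum_const, sum_range_cast, sum_range_sq_cast]
  simp [Finset.card_range]
  field_simp

lemma sum_range_split (d c : ℕ) (f : ℕ → ℝ) :
    ∑ s ∈ Finset.range (d + c), f s
      = ∑ s ∈ Finset.range d, f s + ∑ t ∈ Finset.range c, f (d + t) := by
  have h2 : ∑ i ∈ Finset.Ico d (d + c), f i = ∑ t ∈ Finset.range c, f (d + t) := by
    rw [Finset.sum_Ico_eq_sum_range]; simp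
  rw [Finset.range_eq_Ico, ← Finset.sum_Ico_consecutive _ (Nat.zero_le d) (Nat.le_add_right d c),
    h2, ← Finset.range_eq_Ico]

lemma lemA (g c : ℕ) (hc : c < g) (x : ℝ) (hx : 0 < x) (hx' : x < 1 / g) :
    ∑ s ∈ range g, saw ((s : ℝ) / g + x) * saw ((((s + c) % g : ℕ) : ℝ) / g + x)
      = (g - 1) * (2 * g - 1) / (6 * g) + (x - 1/2) * (g - 1) + g * (x - 1/2) ^ 2
        + c * (c - g) / (2 * g) := by
  have hg : 0 < g := lt_of_le_of_lt (Nat.zero_le c) hc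
  have hgR : (0 : ℝ) < g := by exact_mod_cast hg
  have key : ∀ a : ℕ, a < g → saw ((a : ℝ) / g + x) = (a : ℝ) / g + (x - 1/2) := by
    intro a ha
    have h0 : 0 < (a : ℝ) / g + x := by positivity
    have h1 : (a : ℝ) / g + x < 1 := by
      have haR : (a : ℝ) ≤ (g : ℝ) - 1 := by
        have : (a : ℝ) + 1 ≤ g := by exact_mod_cast ha
        linarith
      have : (a : ℝ) / g ≤ ((g : ℝ) - 1) / g := by
        gcongr
      have hxg : x < 1 / g := hx'
      calc (a : ℝ) / g + x < ((g:ℝ)-1)/g + 1/g := by linarith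
        _ = 1 := by field_simp; ring
    rw [saw_of_Ioo _ h0 h1]; ring
  have hsum : ∀ s ∈ range g, saw ((s : ℝ) / g + x) * saw ((((s + c) % g : ℕ) : ℝ) / g + x)
      = ((s : ℝ) / g + (x - 1/2)) * ((((s + c) % g : ℕ) : ℝ) / g + (x - 1/2)) := by
    intro s hs
    rw [key s (Finset.mem_range.1 hs), key _ (Nat.mod_lt _ hg)]
  rw [Finset.sum_congr rfl hsum]
  set a := x - 1/2 with ha
  set d := g - c with hd
  have hdc : d + c = g := by omega
  have hsplit := sum_range_split d c
    (fun s => ((s : ℝ) / g + a) * ((((s + c) % g : ℕ) : ℝ) / g + a))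
  rw [hdc] at hsplit
  rw [hsplit]
  have e1 : ∑ s ∈ range d, ((s : ℝ) / g + a) * ((((s + c) % g : ℕ) : ℝ) / g + a)
      = ∑ s ∈ range d, ((s : ℝ) / g + a) * ((s : ℝ) / g + (a + (c : ℝ) / g)) := by
    apply Finset.sum_congr rfl
    intro s hs
    have hs' : s + c < g := by have := Finset.mem_range.1 hs; omega
    rw [Nat.mod_eq_of_lt hs']
    push_cast
    ring_nf
  have e2 : ∑ t ∈ range c, (((d + t : ℕ) : ℝ) / g + a) * ((((d + t + c) % g : ℕ) : ℝ) / g + a)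
      = ∑ t ∈ range c, ((t : ℝ) / g + (a + (d : ℝ) / g)) * ((t : ℝ) / g + a) := by
    apply Finset.sum_congr rfl
    intro t ht
    have htc := Finset.mem_range.1 ht
    have hmod : (d + t + c) % g = t := by
      have : d + t + c = g + t := by omega
      rw [this, Nat.add_mod_left, Nat.mod_eq_of_lt (by omega)]
    rw [hmod]
    push_cast
    ring_nf
  rw [e1, e2, sum_lin_prod _ _ _ _ (ne_of_gt hgR), sum_lin_prod _ _ _ _ (ne_of_gt hgR)]
  have hdR : (d : ℝ) = (g : ℝ) - c := by
    rw [hd]; push_cast [Nat.cast_sub hc.le]; ring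
  rw [hdR]
  field_simp
  ring

lemma lemA0 (g : ℕ) (hg : 0 < g) :
    ∑ s ∈ range g, saw ((s : ℝ) / g) * saw ((s : ℝ) / g)
      = (g - 1) * (2 * g - 1) / (6 * g) + (0 - 1/2) * (g - 1) + g * ((0:ℝ) - 1/2) ^ 2
        - 1/4 := by
  have hgR : (0 : ℝ) < g := by exact_mod_cast hg
  have hterm : ∀ s ∈ range g, saw ((s : ℝ) / g) * saw ((s : ℝ) / g)
      = ((s : ℝ) / g + (-1/2)) * ((s : ℝ) / g + (-1/2)) - (if s = 0 then (1:ℝ)/4 else 0) := by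
    intro s hs
    rcases Nat.eq_zero_or_pos s with h0 | h0
    · subst h0
      simp only [Nat.cast_zero, zero_div, if_pos rfl]
      rw [show (0:ℝ) = ((0:ℤ):ℝ) by norm_num, saw_intCast]
      norm_num
    · have hlt : (s : ℝ) / g < 1 := by
        rw [div_lt_one hgR]
        exact_mod_cast Finset.mem_range.1 hs
      have hpos : 0 < (s : ℝ) / g := by
        apply div_pos _ hgR
        exact_mod_cast h0
      rw [saw_of_Ioo _ hpos hlt, if_neg (by omega)]
      ring
  rw [Finset.sum_congr rfl hterm, Finset.sum_sub_distrib,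
    sum_lin_prod _ _ _ _ (ne_of_gt hgR), Finset.sum_ite_eq' (range g) 0 (fun _ => (1:ℝ)/4),
    if_pos (Finset.mem_range.2 hg)]
  field_simp
  ring

lemma ded_eq_range (m : ℤ) (N : ℕ) (hN : 0 < N) :
    ded m (N : ℤ) = ∑ j ∈ range N, saw ((j : ℝ) / N) * saw ((m : ℝ) * j / N) := by
  have hNR : (N : ℝ) ≠ 0 := by positivity
  set T : ℕ → ℝ := fun i => saw ((i : ℝ) / N) * saw ((m : ℝ) * i / N) with hT
  have himg : Finset.Icc (1 : ℤ) (N : ℤ) = Finset.image (fun i : ℕ => (i : ℤ) + 1) (range N) := by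
    ext z
    simp only [Finset.mem_Icc, Finset.mem_image, Finset.mem_range]
    constructor
    · intro ⟨h1, h2⟩
      exact ⟨(z - 1).toNat, by omega, by omega⟩
    · rintro ⟨i, hi, rfl⟩
      omega
  have hinj : Set.InjOn (fun i : ℕ => (i : ℤ) + 1) (range N) := by
    intro a _ b _ h; simpa using h
  rw [ded, himg, Finset.sum_image hinj]
  have hstep : ∀ i ∈ range N,
      saw ((((i : ℤ) + 1 : ℤ) : ℝ) / ((N : ℤ) : ℝ)) *
        saw ((m : ℝ) * (((i : ℤ) + 1 : ℤ) : ℝ) / ((N : ℤ) : ℝ)) = T (i + 1) := by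
    intro i _
    simp only [hT]
    push_cast
    ring_nf
  rw [Finset.sum_congr rfl hstep]
  have h0 : T 0 = 0 := by
    simp only [hT]
    rw [Nat.cast_zero, zero_div, show (0:ℝ) = ((0:ℤ):ℝ) by norm_num, saw_intCast]
    ring
  have hN' : T N = 0 := by
    simp only [hT]
    rw [div_self hNR, show (1:ℝ) = ((1:ℤ):ℝ) by norm_num, saw_intCast]
    ring
  have := Finset.sum_range_succ' T N
  rw [Finset.sum_range_succ T N] at this
  -- this : ∑ range N T + T N = ∑ range N (T (·+1)) + T 0
  have heq : ∑ i ∈ range N, T (i + 1) = ∑ i ∈ range N, T i := by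
    rw [h0, hN'] at this
    linarith
  rw [heq]

lemma emod_toNat_lt (x : ℤ) (h : ℕ) (hh : 0 < h) : (x % (h : ℤ)).toNat < h := by
  have h1 : 0 ≤ x % (h : ℤ) := Int.emod_nonneg x (by exact_mod_cast hh.ne')
  have h2 : x % (h : ℤ) < h := Int.emod_lt_of_pos x (by exact_mod_cast hh)
  omega

lemma saw_mod_div (a g : ℕ) (y : ℝ) (hg : 0 < g) :
    saw ((a : ℝ) / g + y) = saw ((((a % g : ℕ)) : ℝ) / g + y) := by
  have hgR : (g : ℝ) ≠ 0 := by positivity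
  set K : ℕ := a / g with hK
  set r : ℕ := a % g with hr
  have h1 : (a : ℝ) / g + y = (r : ℝ) / g + y + ((K : ℤ) : ℝ) := by
    have hng : g * K + r = a := Nat.div_add_mod a g
    have hcast : (a : ℝ) = (g : ℝ) * (K : ℝ) + (r : ℝ) := by exact_mod_cast hng.symm
    rw [hcast]
    push_cast
    field_simp
    ring
  rw [h1, saw_int_add]

lemma keyB (N g h e : ℕ) (b1 : ℤ) (hg : 0 < g) (hh : 0 < h) (he : 0 < e)
    (hN : N = g * h) (hge : g = h * e) (hb1 : Int.gcd b1 h = 1) :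
    ded (1 + (g : ℤ) * b1) (N : ℤ)
      = (2 / (N : ℝ) + (g : ℝ) ^ 2 / N - 3) / 12 := by
  have hNpos : 0 < N := by rw [hN]; positivity
  have hNR : (0:ℝ) < N := by exact_mod_cast hNpos
  have hgR : (0:ℝ) < g := by exact_mod_cast hg
  have hhR : (0:ℝ) < h := by exact_mod_cast hh
  have heR : (0:ℝ) < e := by exact_mod_cast he
  have hNgh : (N : ℝ) = g * h := by exact_mod_cast congrArg (Nat.cast : ℕ → ℝ) hN
  have hgeR : (g : ℝ) = h * e := by exact_mod_cast congrArg (Nat.cast : ℕ → ℝ) hge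
  set φ : ℕ → ℕ := fun u => ((u * b1) % (h : ℤ)).toNat with hφ
  have hφlt : ∀ u, φ u < h := fun u => emod_toNat_lt _ _ hh
  have hφ0 : φ 0 = 0 := by simp [hφ]
  rw [ded_eq_range _ _ hNpos]
  -- step A: reindex to pairs
  have stepA : ∑ j ∈ range N, saw ((j : ℝ) / N) * saw (((1 + (g:ℤ)*b1 : ℤ) : ℝ) * j / N)
      = ∑ u ∈ range h, ∑ s ∈ range g,
          saw ((s : ℝ) / g + (u : ℝ) / N) *
            saw ((((s + φ u * e) % g : ℕ) : ℝ) / g + (u : ℝ) / N) := by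
    rw [← Finset.sum_product']
    symm
    apply Finset.sum_nbij' (i := fun p : ℕ × ℕ => p.2 * h + p.1)
      (j := fun j : ℕ => (j % h, j / h))
    · rintro ⟨u, s⟩ hp
      simp only [Finset.mem_product, Finset.mem_range] at hp
      simp only [Finset.mem_range]
      rw [hN]
      rcases hp with ⟨hu, hs⟩
      calc s * h + u < s * h + h := by omega
        _ = (s + 1) * h := by ring
        _ ≤ g * h := by
            apply Nat.mul_le_mul_right
            omega
    · intro j hj
      simp only [Finset.mem_range] at hj
      simp only [Finset.mem_product, Finset.mem_range]
      constructor
      · exact Nat.mod_lt _ hh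
      · rw [hN, mul_comm] at hj
        exact Nat.div_lt_of_lt_mul hj
    · rintro ⟨u, s⟩ hp
      simp only [Finset.mem_product, Finset.mem_range] at hp
      have h1 : (s * h + u) % h = u := by
        rw [Nat.mul_add_mod', Nat.mod_eq_of_lt hp.1]
      have h2 : (s * h + u) / h = s := by
        rw [Nat.add_comm, mul_comm, Nat.add_mul_div_left _ _ hh, Nat.div_eq_of_lt hp.1,
          Nat.zero_add]
      rw [h1, h2]
    · intro j hj
      simp only
      rw [mul_comm]
      exact Nat.div_add_mod j h
    · rintro ⟨u, s⟩ hp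
      simp only [Finset.mem_product, Finset.mem_range] at hp
      obtain ⟨hu, hs⟩ := hp
      simp only
      -- per-term identity
      have hj1 : (((s * h + u : ℕ)) : ℝ) / N = (s : ℝ) / g + (u : ℝ) / N := by
        rw [hNgh]
        push_cast
        field_simp
      have hφcast : ((φ u : ℕ) : ℤ) = ((u : ℤ) * b1) % h := by
        simp only [hφ]
        exact Int.toNat_of_nonneg (Int.emod_nonneg _ (by exact_mod_cast hh.ne'))
      have hdm : (h : ℤ) * (((u : ℤ) * b1) / h) + ((φ u : ℕ) : ℤ) = (u : ℤ) * b1 := by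
        rw [hφcast]
        exact Int.mul_ediv_add_emod _ _
      have hdmR : (h : ℝ) * ((((u : ℤ) * b1) / (h : ℤ) : ℤ) : ℝ) + ((φ u : ℕ) : ℝ)
          = (u : ℝ) * (b1 : ℝ) := by exact_mod_cast hdm
      have hφR : ((φ u : ℕ) : ℝ)
          = (u : ℝ) * (b1 : ℝ) - (h : ℝ) * ((((u : ℤ) * b1) / (h : ℤ) : ℤ) : ℝ) := by
        linarith
      have hf2 : ((1 + (g : ℤ) * b1 : ℤ) : ℝ) * (((s * h + u : ℕ)) : ℝ) / N
          = (((s + φ u * e : ℕ)) : ℝ) / g + (u : ℝ) / N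
            + ((b1 * s + ((u : ℤ) * b1) / h : ℤ) : ℝ) := by
        rw [hNgh]
        push_cast
        rw [hφR, hgeR]
        field_simp
        ring
      rw [hj1, hf2, saw_int_add, saw_mod_div (s + φ u * e) g ((u : ℝ) / N) hg]
  rw [stepA]
  -- step B: evaluate inner sums
  have h0mem : (0 : ℕ) ∈ range h := Finset.mem_range.2 hh
  set R : ℕ → ℝ := fun u =>
    (g - 1) * (2 * g - 1) / (6 * g) + ((u:ℝ)/N - 1/2) * (g - 1) + g * ((u:ℝ)/N - 1/2)^2
      + ((φ u * e : ℕ) : ℝ) * (((φ u * e : ℕ) : ℝ) - g) / (2 * g) with hR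
  have stepB : ∑ u ∈ range h, ∑ s ∈ range g,
        saw ((s : ℝ) / g + (u : ℝ) / N) *
          saw ((((s + φ u * e) % g : ℕ) : ℝ) / g + (u : ℝ) / N)
      = (∑ u ∈ range h, R u) - 1/4 := by
    have hterm : ∀ u ∈ range h, (∑ s ∈ range g, saw ((s : ℝ) / g + (u : ℝ) / N) *
          saw ((((s + φ u * e) % g : ℕ) : ℝ) / g + (u : ℝ) / N))
        = R u - (if u = 0 then (1:ℝ)/4 else 0) := by
      intro u hu
      rcases Nat.eq_zero_or_pos u with rfl | hu0
      · rw [if_pos rfl]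
        have hcon : ∀ s ∈ range g, saw ((s : ℝ) / g + ((0:ℕ) : ℝ) / N) *
            saw ((((s + φ 0 * e) % g : ℕ) : ℝ) / g + ((0:ℕ) : ℝ) / N)
            = saw ((s:ℝ)/g) * saw ((s:ℝ)/g) := by
          intro s hs
          rw [hφ0, Nat.zero_mul, Nat.add_zero, Nat.mod_eq_of_lt (Finset.mem_range.1 hs)]
          norm_num
        rw [Finset.sum_congr rfl hcon, lemA0 g hg]
        simp only [hR, hφ0, Nat.zero_mul, Nat.cast_zero, zero_div]
        push_cast
        ring
      · rw [if_neg (by omega)]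
        have hc : φ u * e < g := by
          calc φ u * e < h * e := mul_lt_mul_of_pos_right (hφlt u) he
            _ = g := hge.symm
        have hu0R : (0:ℝ) < (u:ℝ) := by exact_mod_cast hu0
        have hx : (0:ℝ) < (u:ℝ)/N := div_pos hu0R hNR
        have hx' : (u:ℝ)/N < 1/g := by
          rw [div_lt_div_iff₀ hNR hgR]
          have : u * g < h * g := by
            exact Nat.mul_lt_mul_of_lt_of_le (Finset.mem_range.1 hu) (le_refl g) hg
          calc (u:ℝ) * g < (h:ℝ) * g := by exact_mod_cast this
            _ = 1 * N := by rw [hNgh]; ring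
        rw [lemA g (φ u * e) hc _ hx hx']
        simp only [hR]
        push_cast
        ring
    rw [Finset.sum_congr rfl hterm, Finset.sum_sub_distrib,
      Finset.sum_ite_eq' (range h) 0 (fun _ => (1:ℝ)/4), if_pos h0mem]
  rw [stepB]
  -- step C: c-part bijection and closed forms
  set Q : ℕ → ℝ := fun u => ((g:ℝ) - 1) * (2 * g - 1) / (6 * g)
      + g * (((u:ℝ)/N + (-1/2)) * ((u:ℝ)/N + ((g-1)/g - 1/2))) with hQ
  set Cp : ℕ → ℝ := fun v => ((v:ℝ) * e) * ((v:ℝ) * e - g) / (2 * g) with hCp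
  have stepC : ∑ u ∈ range h, R u
      = (∑ u ∈ range h, Q u) + ∑ v ∈ range h, Cp v := by
    have hRQ : ∀ u ∈ range h, R u = Q u + Cp (φ u) := by
      intro u _
      simp only [hR, hQ, hCp]
      push_cast
      field_simp
      ring
    rw [Finset.sum_congr rfl hRQ, Finset.sum_add_distrib]
    congr 1
    -- bijection u ↦ φ u on range h
    have hcop : IsCoprime b1 (h : ℤ) := Int.isCoprime_iff_gcd_eq_one.2 hb1
    obtain ⟨a, b, hab⟩ := hcop
    have hφcast : ∀ u : ℕ, ((φ u : ℕ) : ℤ) = ((u : ℤ) * b1) % h := by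
      intro u
      simp only [hφ]
      exact Int.toNat_of_nonneg (Int.emod_nonneg _ (by exact_mod_cast hh.ne'))
    set ψ : ℕ → ℕ := fun v => (((v : ℤ) * a) % (h : ℤ)).toNat with hψ
    have hψcast : ∀ v : ℕ, ((ψ v : ℕ) : ℤ) = ((v : ℤ) * a) % h := by
      intro v
      simp only [hψ]
      exact Int.toNat_of_nonneg (Int.emod_nonneg _ (by exact_mod_cast hh.ne'))
    have hmodmul : ∀ x y : ℤ, ((x % h) * y) % h = (x * y) % h := by
      intro x y
      conv_rhs => rw [Int.mul_emod]
      rw [Int.mul_emod, Int.emod_emod_of_dvd x dvd_rfl]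
    have hZh : (0:ℤ) < (h:ℤ) := by exact_mod_cast hh
    apply Finset.sum_nbij' (i := φ) (j := ψ)
    · intro u _; exact Finset.mem_range.2 (hφlt u)
    · intro v _; exact Finset.mem_range.2 (emod_toNat_lt _ _ hh)
    · intro u hu
      have hu' := Finset.mem_range.1 hu
      have hz : ((ψ (φ u) : ℕ) : ℤ) = (u : ℤ) := by
        rw [hψcast, hφcast, hmodmul]
        have e1 : (u : ℤ) * b1 * a = (u : ℤ) + (h : ℤ) * (-((u:ℤ) * b)) := by
          linear_combination (u : ℤ) * hab
        rw [e1, Int.add_mul_emod_self_left]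
        exact Int.emod_eq_of_lt (by positivity) (by exact_mod_cast hu')
      exact_mod_cast hz
    · intro v hv
      have hv' := Finset.mem_range.1 hv
      have hz : ((φ (ψ v) : ℕ) : ℤ) = (v : ℤ) := by
        rw [hφcast, hψcast, hmodmul]
        have e1 : (v : ℤ) * a * b1 = (v : ℤ) + (h : ℤ) * (-((v:ℤ) * b)) := by
          linear_combination (v : ℤ) * hab
        rw [e1, Int.add_mul_emod_self_left]
        exact Int.emod_eq_of_lt (by positivity) (by exact_mod_cast hv')
      exact_mod_cast hz
    · intro u _; rfl
  rw [stepC]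
  -- step D: final algebra
  have hQsum : ∑ u ∈ range h, Q u
      = h * (((g:ℝ) - 1) * (2 * g - 1) / (6 * g))
        + g * ((h * (h - 1) * (2 * h - 1) / 6) / (N:ℝ) ^ 2
          + ((-1/2) + ((g-1)/g - 1/2)) * (h * (h - 1) / 2) / N
          + (-1/2) * ((g-1)/g - 1/2) * h) := by
    simp only [hQ]
    rw [Finset.sum_add_distrib, Finset.sum_const, Finset.card_range, ← Finset.mul_sum,
      sum_lin_prod h N (-1/2) ((g-1)/g - 1/2) (ne_of_gt hNR)]
    rw [nsmul_eq_mul]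
  have hCsum : ∑ v ∈ range h, Cp v
      = ((e:ℝ)^2/(2*g)) * (h * (h - 1) * (2 * h - 1) / 6)
        - ((e:ℝ)/2) * (h * (h - 1) / 2) := by
    have hCpterm : ∀ v ∈ range h, Cp v
        = ((e:ℝ)^2/(2*g)) * (v:ℝ)^2 - ((e:ℝ)/2) * (v:ℝ) := by
      intro v _
      simp only [hCp]
      field_simp
    rw [Finset.sum_congr rfl hCpterm, Finset.sum_sub_distrib, ← Finset.mul_sum, ← Finset.mul_sum,
      sum_range_sq_cast, sum_range_cast]
  rw [hQsum, hCsum, hNgh, hgeR]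
  have hhne : (h:ℝ) ≠ 0 := ne_of_gt hhR
  have hene : (e:ℝ) ≠ 0 := ne_of_gt heR
  field_simp
  ring

lemma ded_neg (m n : ℤ) : ded (-m) n = - ded m n := by
  unfold ded
  rw [← Finset.sum_neg_distrib]
  apply Finset.sum_congr rfl
  intro j _
  have h1 : ((-m : ℤ) : ℝ) * j / n = -((m : ℝ) * j / n) := by push_cast; ring
  rw [h1, saw_neg]
  ring

theorem rademacher_power_corollary (l k r q : ℕ) (hl : 0 < l) (hk : 0 < k) (hr : 0 < r)
    (hq : 0 < q) (hrk : r ≤ k) (hqdvd : q ∣ l ^ (k - r)) (hlq : ¬ l ∣ q)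
    (hcase : k ≤ 2 * r ∨ (2 * r < k ∧ l ^ (k - 2 * r) ∣ q ^ 2))
    (ε : ℤ) (hε : ε = 1 ∨ ε = -1) (m : ℤ)
    (hm : Int.gcd m ((l ^ (k - r) / q : ℕ) : ℤ) = 1) :
    Sded (ε + (l : ℤ) ^ r * (q : ℤ) * m) ((l : ℤ) ^ k) =
      (ε : ℝ) * (2 / (l : ℝ) ^ k + (l : ℝ) ^ (2 * (r : ℤ) - (k : ℤ)) * (q : ℝ) ^ 2 - 3) := by
  set N : ℕ := l ^ k with hN
  set c : ℕ := l ^ r * q with hc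
  set h' : ℕ := l ^ (k - r) / q with hh'
  have hNpos : 0 < N := pow_pos hl k
  have hcpos : 0 < c := by positivity
  have hh'pos : 0 < h' := Nat.div_pos (Nat.le_of_dvd (pow_pos hl _) hqdvd) hq
  have hNch : N = c * h' := by
    rw [hN, hc, hh', mul_assoc, Nat.mul_div_cancel' hqdvd, ← pow_add]
    congr 1
    omega
  have hNdvd : N ∣ c ^ 2 := by
    have hc2 : c ^ 2 = l ^ (2 * r) * q ^ 2 := by rw [hc, mul_pow, pow_mul']
    rcases hcase with hle | ⟨hlt, hdvd⟩
    · have : N ∣ l ^ (2 * r) := pow_dvd_pow l hle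
      exact hc2 ▸ this.mul_right _
    · have : N = l ^ (2 * r) * l ^ (k - 2 * r) := by rw [hN, ← pow_add]; congr 1; omega
      rw [hc2, this]
      exact mul_dvd_mul_left _ hdvd
  have hh'c : h' ∣ c := by
    have h1 : c * h' ∣ c * c := by rw [← hNch, ← pow_two]; exact hNdvd
    exact (mul_dvd_mul_iff_left hcpos.ne').1 h1
  set e : ℕ := c / h' with he
  have hce : c = h' * e := (Nat.mul_div_cancel' hh'c).symm
  have hepos : 0 < e := by
    rcases Nat.eq_zero_or_pos e with h0 | h0
    · rw [h0, mul_zero] at hce; omega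
    · exact h0
  set b1 : ℤ := ε * m with hb1def
  have hgcd : Int.gcd b1 (h' : ℤ) = 1 := by
    rcases hε with rfl | rfl
    · rw [hb1def, one_mul]; exact hm
    · rw [hb1def, neg_one_mul, Int.neg_gcd]; exact hm
  have hkey := keyB N c h' e b1 hcpos hh'pos hepos hNch hce hgcd
  have hε2 : ε * ε = 1 := by rcases hε with rfl | rfl <;> norm_num
  have harg : ε + (l : ℤ) ^ r * (q : ℤ) * m = ε * (1 + (c : ℤ) * b1) := by
    have hcZ : ((c : ℕ) : ℤ) = (l : ℤ) ^ r * q := by rw [hc]; push_cast; ring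
    rw [hb1def, hcZ]
    have : ε * (1 + (l:ℤ)^r * q * (ε * m)) = ε + (ε * ε) * ((l:ℤ)^r * q * m) := by ring
    rw [this, hε2]
    ring
  have hNZ : (l : ℤ) ^ k = ((N : ℕ) : ℤ) := by rw [hN]; push_cast; ring
  have hded : ded (ε * (1 + (c : ℤ) * b1)) ((N : ℕ) : ℤ)
      = (ε : ℝ) * ded (1 + (c : ℤ) * b1) ((N : ℕ) : ℤ) := by
    rcases hε with rfl | rfl
    · rw [one_mul]; norm_num
    · rw [neg_one_mul, ded_neg]; push_cast; ring
  rw [Sded, harg, hNZ, hded, hkey]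
  have hNR : (N : ℝ) = (l : ℝ) ^ k := by rw [hN]; push_cast; ring
  have hlR : (0:ℝ) < (l:ℝ) := by exact_mod_cast hl
  have hzpow : (l : ℝ) ^ (2 * (r : ℤ) - (k : ℤ)) * (q : ℝ) ^ 2 = (c : ℝ) ^ 2 / N := by
    rw [zpow_sub₀ (ne_of_gt hlR), hNR, hc]
    have h2r : (l : ℝ) ^ (2 * (r : ℤ)) = (l : ℝ) ^ (2 * r : ℕ) := by
      rw [← zpow_natCast]; norm_num
    rw [h2r, zpow_natCast]
    push_cast
    rw [pow_mul']
    field_simp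
  rw [hzpow, hNR]
  ring
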